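/- arXiv:1705.02605 — 5 statements merged into one kernel-verified Lean document; each statement's English description precedes it below -/
import Mathlib

section
/- Let F be a number field (viewed inside ℂ), let t = e^{2πi m/n} with 1 ≤ m < n and gcd(m,n) = 1, let k ≥ 1, and set h_k(n) = ∏_{p | k, p | n} p^{v_p(k)}. Fix the k-th root ζ = e^{2πi m/(k n)} of t. Then the union over l = 0, …, k−1 of the fields F(e^{2πi l/k} · ζ) all contain F(e^{2πi/(h_k(n)·n)}), and moreover there exists l₀ ∈ {0,…,k−1} with F(e^{2πi l₀/k} · ζ) = F(e^{2πi/(h_k(n)·n)}). -/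
open Complex

/-- `Hkn k n = ∏_{p | k, p | n} p^{v_p(k)}`. -/
def Hkn (k n : ℕ) : ℕ :=
  ∏ p ∈ k.primeFactors ∩ n.primeFactors, p ^ (k.factorization p)

/-- The subfield of `ℂ` generated by a subfield `F` (containing `ℚ`) and `x`. -/
noncomputable def adjC (F : IntermediateField ℚ ℂ) (x : ℂ) : IntermediateField ℚ ℂ :=
  F ⊔ IntermediateField.adjoin ℚ {x}

lemma adjC_le_adjC (F : IntermediateField ℚ ℂ) {x y : ℂ} (hxy : x ∈ adjC F y) :
    adjC F x ≤ adjC F y := by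
  unfold adjC at *
  exact sup_le le_sup_left (IntermediateField.adjoin_le_iff.mpr (by
    simpa [Set.singleton_subset_iff] using hxy))

lemma exp_mem_adjC (F : IntermediateField ℚ ℂ) (a b N : ℕ) (hN : 0 < N)
    (hdvd : Nat.gcd a N ∣ b) :
    Complex.exp (2 * Real.pi * I * ((b : ℂ) / (N : ℂ))) ∈
      adjC F (Complex.exp (2 * Real.pi * I * ((a : ℂ) / (N : ℂ)))) := by
  obtain ⟨c, hc⟩ := hdvd
  have hbez := Int.gcd_eq_gcd_ab (a : ℤ) (N : ℤ)
  set u := Int.gcdA (a : ℤ) (N : ℤ) with hu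
  set v := Int.gcdB (a : ℤ) (N : ℤ) with hv
  have hgcd : (Int.gcd (a : ℤ) (N : ℤ) : ℤ) = (Nat.gcd a N : ℤ) := by
    rw [Int.gcd_natCast_natCast]
  have key : (a : ℤ) * (u * (c : ℤ)) = (b : ℤ) + (-(v * (c : ℤ))) * (N : ℤ) := by
    have hb : (b : ℤ) = (Nat.gcd a N : ℤ) * (c : ℤ) := by exact_mod_cast hc
    rw [hb, ← hgcd, hbez]; ring
  have hNC : (N : ℂ) ≠ 0 := Nat.cast_ne_zero.mpr hN.ne'
  have hx : Complex.exp (2 * Real.pi * I * ((b : ℂ) / (N : ℂ))) =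
      Complex.exp (2 * Real.pi * I * ((a : ℂ) / (N : ℂ))) ^ (u * (c : ℤ)) := by
    rw [← Complex.exp_int_mul, Complex.exp_eq_exp_iff_exists_int]
    refine ⟨v * (c : ℤ), ?_⟩
    have keyC : (a : ℂ) * ((u : ℂ) * (c : ℂ)) =
        (b : ℂ) + (-((v : ℂ) * (c : ℂ))) * (N : ℂ) := by exact_mod_cast key
    have hfrac : ((u * (c : ℤ) : ℤ) : ℂ) * ((a : ℂ) / (N : ℂ)) =
        (b : ℂ) / (N : ℂ) + ((-(v * (c : ℤ)) : ℤ) : ℂ) := by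
      push_cast
      field_simp
      linear_combination keyC
    push_cast at hfrac ⊢
    linear_combination (-(2 * (Real.pi : ℂ) * I)) * hfrac
  have hmem : Complex.exp (2 * Real.pi * I * ((a : ℂ) / (N : ℂ))) ∈
      adjC F (Complex.exp (2 * Real.pi * I * ((a : ℂ) / (N : ℂ)))) := by
    unfold adjC
    exact (le_sup_right : IntermediateField.adjoin ℚ {_} ≤ _)
      (IntermediateField.mem_adjoin_simple_self ℚ _)
  rw [hx]
  exact zpow_mem hmem _

theorem adjoin_kth_roots_of_root_of_unity
    (F : IntermediateField ℚ ℂ) (hF : FiniteDimensional ℚ F)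
    (m n k : ℕ) (hm : 1 ≤ m) (hmn : m < n) (hcop : Nat.gcd m n = 1) (hk : 1 ≤ k) :
    (∀ l : ℕ, l ≤ k - 1 →
      adjC F (Complex.exp (2 * Real.pi * I * (1 / ((Hkn k n : ℂ) * (n : ℂ))))) ≤
        adjC F (Complex.exp (2 * Real.pi * I * ((l : ℂ) / (k : ℂ))) *
          Complex.exp (2 * Real.pi * I * ((m : ℂ) / ((k : ℂ) * (n : ℂ)))))) ∧
    (∃ l₀ : ℕ, l₀ ≤ k - 1 ∧
      adjC F (Complex.exp (2 * Real.pi * I * ((l₀ : ℂ) / (k : ℂ))) *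
          Complex.exp (2 * Real.pi * I * ((m : ℂ) / ((k : ℂ) * (n : ℂ))))) =
        adjC F (Complex.exp (2 * Real.pi * I * (1 / ((Hkn k n : ℂ) * (n : ℂ)))))) := by
  have hk0 : k ≠ 0 := Nat.one_le_iff_ne_zero.mp hk
  have hn0 : n ≠ 0 := by omega
  set h := Hkn k n with hh
  set s := k.primeFactors ∩ n.primeFactors with hs
  -- k as a product over its prime factors
  have hkprod : ∏ p ∈ k.primeFactors, p ^ k.factorization p = k := by
    rw [← Nat.support_factorization]
    exact Nat.factorization_prod_pow_eq_self hk0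
  -- h ∣ k
  have hhk : h ∣ k := by
    rw [hh, Hkn]
    have h2 := Finset.prod_dvd_prod_of_subset (k.primeFactors ∩ n.primeFactors) k.primeFactors
      (fun p => p ^ k.factorization p) Finset.inter_subset_left
    rwa [hkprod] at h2
  have hh0 : h ≠ 0 := by
    intro hz; rw [hz] at hhk; exact hk0 (Nat.eq_zero_of_zero_dvd hhk)
  have hkhh : (k / h) * h = k := Nat.div_mul_cancel hhk
  have hkh0 : 0 < k / h := Nat.div_pos (Nat.le_of_dvd (Nat.pos_of_ne_zero hk0) hhk)
    (Nat.pos_of_ne_zero hh0)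
  -- h divides a power of n
  have hhnpow : h ∣ n ^ (∑ p ∈ s, k.factorization p) := by
    rw [hh, Hkn, ← Finset.prod_pow_eq_pow_sum]
    exact Finset.prod_dvd_prod_of_dvd _ _ (fun p hp =>
      pow_dvd_pow_of_dvd (Nat.dvd_of_mem_primeFactors (Finset.mem_of_mem_inter_right hp)) _)
  -- k/h is coprime to n
  have hkhn : Nat.Coprime (k / h) n := by
    apply Nat.coprime_of_dvd
    intro p hp hpkh hpn
    have hpk : p ∣ k := hpkh.trans (Nat.div_dvd_of_dvd hhk)
    have hpmem : p ∈ s := Finset.mem_inter.mpr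
      ⟨Nat.mem_primeFactors.mpr ⟨hp, hpk, hk0⟩, Nat.mem_primeFactors.mpr ⟨hp, hpn, hn0⟩⟩
    have hterm : p ^ k.factorization p ∣ h := by
      rw [hh, Hkn]; exact Finset.dvd_prod_of_mem _ hpmem
    have hstep : p ^ (k.factorization p + 1) ∣ (k / h) * h := by
      rw [pow_succ, mul_comm (p ^ k.factorization p) p]
      exact mul_dvd_mul hpkh hterm
    rw [hkhh] at hstep
    exact Nat.pow_succ_factorization_not_dvd hk0 hp hstep
  have hNC : ((k * n : ℕ) : ℂ) ≠ 0 := by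
    exact_mod_cast Nat.cast_ne_zero.mpr (Nat.mul_ne_zero hk0 hn0)
  have hkC : (k : ℂ) ≠ 0 := Nat.cast_ne_zero.mpr hk0
  have hnC : (n : ℂ) ≠ 0 := Nat.cast_ne_zero.mpr hn0
  have hhC : (h : ℂ) ≠ 0 := Nat.cast_ne_zero.mpr hh0
  -- rewrite the roots in canonical form
  have hroot : ∀ l : ℕ,
      Complex.exp (2 * Real.pi * I * ((l : ℂ) / (k : ℂ))) *
        Complex.exp (2 * Real.pi * I * ((m : ℂ) / ((k : ℂ) * (n : ℂ)))) =
      Complex.exp (2 * Real.pi * I * (((l * n + m : ℕ) : ℂ) / ((k * n : ℕ) : ℂ))) := by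
    intro l
    rw [← Complex.exp_add]
    congr 1
    push_cast
    field_simp
  have htarget :
      Complex.exp (2 * Real.pi * I * (1 / ((h : ℂ) * (n : ℂ)))) =
      Complex.exp (2 * Real.pi * I * (((k / h : ℕ) : ℂ) / ((k * n : ℕ) : ℂ))) := by
    congr 1
    have e : ((k * n : ℕ) : ℂ) = ((k / h : ℕ) : ℂ) * (h : ℂ) * (n : ℂ) := by
      exact_mod_cast congrArg (Nat.cast : ℕ → ℂ) (show k * n = k / h * h * n by rw [hkhh])
    have hkhC : ((k / h : ℕ) : ℂ) ≠ 0 := Nat.cast_ne_zero.mpr hkh0.ne'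
    rw [e]
    field_simp
  have hNpos : 0 < k * n := Nat.mul_pos (Nat.pos_of_ne_zero hk0) (Nat.pos_of_ne_zero hn0)
  -- Part 1
  have part1 : ∀ l : ℕ, l ≤ k - 1 →
      adjC F (Complex.exp (2 * Real.pi * I * (1 / ((h : ℂ) * (n : ℂ))))) ≤
        adjC F (Complex.exp (2 * Real.pi * I * ((l : ℂ) / (k : ℂ))) *
          Complex.exp (2 * Real.pi * I * ((m : ℂ) / ((k : ℂ) * (n : ℂ))))) := by
    intro l _
    rw [hroot l, htarget]
    apply adjC_le_adjC
    apply exp_mem_adjC F _ _ _ hNpos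
    -- gcd (l*n+m) (k*n) ∣ k/h
    set g := Nat.gcd (l * n + m) (k * n) with hg
    have cop_an : Nat.Coprime (l * n + m) n := (Nat.coprime_mul_right_add_left m n l).mpr hcop
    have cop_gn : Nat.Coprime g n := Nat.Coprime.coprime_dvd_left (Nat.gcd_dvd_left _ _) cop_an
    have hgk : g ∣ k := Nat.Coprime.dvd_of_dvd_mul_right cop_gn (Nat.gcd_dvd_right _ _)
    have cop_gh : Nat.Coprime g h :=
      Nat.Coprime.coprime_dvd_right hhnpow (Nat.Coprime.pow_right _ cop_gn)
    have hgh_k : g * h ∣ k := Nat.Coprime.mul_dvd_of_dvd_of_dvd cop_gh hgk hhk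
    exact (Nat.dvd_div_iff_mul_dvd hhk).mpr (by rwa [mul_comm] at hgh_k)
  refine ⟨part1, ?_⟩
  -- Part 2: choose l₀ with l₀ * n + m ≡ 0 mod k/h
  have hbez := Int.gcd_eq_gcd_ab (n : ℤ) ((k / h : ℕ) : ℤ)
  set u := Int.gcdA (n : ℤ) ((k / h : ℕ) : ℤ) with hu
  set v := Int.gcdB (n : ℤ) ((k / h : ℕ) : ℤ) with hv
  have hgcd1 : (Int.gcd (n : ℤ) ((k / h : ℕ) : ℤ) : ℤ) = 1 := by
    rw [Int.gcd_natCast_natCast]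
    exact_mod_cast congrArg (Nat.cast : ℕ → ℤ) hkhn.symm
  have hun : (n : ℤ) * u = 1 + (-v) * ((k / h : ℕ) : ℤ) := by
    rw [← hgcd1, hbez]; ring
  set KH : ℤ := ((k / h : ℕ) : ℤ) with hKH
  have hKHpos : 0 < KH := by rw [hKH]; exact_mod_cast hkh0
  set L : ℤ := (-(m : ℤ) * u) % KH with hL
  have hL0 : 0 ≤ L := Int.emod_nonneg _ hKHpos.ne'
  have hLlt : L < KH := Int.emod_lt_of_pos _ hKHpos
  set l₀ : ℕ := L.toNat with hl₀
  have hl₀L : (l₀ : ℤ) = L := Int.toNat_of_nonneg hL0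
  have hl₀lt : l₀ < k := by
    have h1 : l₀ < k / h := by
      have h2 := hLlt; rw [← hl₀L, hKH] at h2; exact_mod_cast h2
    exact lt_of_lt_of_le h1 (Nat.div_le_self _ _)
  have hl₀le : l₀ ≤ k - 1 := Nat.le_sub_one_of_lt hl₀lt
  set q : ℤ := (-(m : ℤ) * u) / KH with hq
  have hLdef : L = -(m : ℤ) * u - KH * q := by rw [hL, hq, Int.emod_def]
  have hdvdZ : KH ∣ ((l₀ * n + m : ℕ) : ℤ) := by
    refine ⟨-(m : ℤ) * (-v) - q * n, ?_⟩
    push_cast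
    rw [hl₀L, hLdef]
    linear_combination (-(m : ℤ)) * hun
  have hdvdN : k / h ∣ l₀ * n + m := by rw [hKH] at hdvdZ; exact_mod_cast hdvdZ
  refine ⟨l₀, hl₀le, ?_⟩
  apply le_antisymm ?_ (part1 l₀ hl₀le)
  rw [hroot l₀, htarget]
  apply adjC_le_adjC
  apply exp_mem_adjC F _ _ _ hNpos
  exact (Nat.gcd_dvd_left _ _).trans hdvdN
end

section
/- Let L be a number field, O_L its ring of integers, and u₁, …, u_v a system of fundamental units of O_L. Let t be a unit of O_L written as t = ζ · u₁^{a₁} ⋯ u_v^{a_v} with ζ a root of unity and a₁, …, a_v integers, not all zero (so t is not a root of unity). Let k be a prime number not dividing gcd(|a₁|, …, |a_v|). Then the polynomial T^k − t is irreducible over L. -/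
open NumberField Polynomial

/-- `u : Fin v → (𝓞 L)ˣ` is a system of fundamental units of `𝓞 L`: every unit of `𝓞 L`
is uniquely a root of unity times a product of integer powers of the `u i`. -/
def IsFundamentalSystem {L : Type} [Field L] [NumberField L] {v : ℕ}
    (u : Fin v → (𝓞 L)ˣ) : Prop :=
  ∀ w : (𝓞 L)ˣ, ∃! p : (𝓞 L)ˣ × (Fin v → ℤ),
    IsOfFinOrder p.1 ∧ w = p.1 * ∏ i, (u i) ^ (p.2 i)

theorem irreducible_X_pow_sub_unit
    (L : Type) [Field L] [NumberField L] (v : ℕ) (u : Fin v → (𝓞 L)ˣ)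
    (hu : IsFundamentalSystem u)
    (t ζ : (𝓞 L)ˣ) (a : Fin v → ℤ) (hζ : IsOfFinOrder ζ)
    (ht : t = ζ * ∏ i, (u i) ^ (a i)) (hne : ∃ i, a i ≠ 0)
    (k : ℕ) (hk : k.Prime) (hdvd : ¬ ((k : ℤ) ∣ Finset.gcd Finset.univ a)) :
    Irreducible (X ^ k - C (algebraMap (𝓞 L) L (t : 𝓞 L))) := by
  apply X_pow_sub_C_irreducible_of_prime hk
  intro b hb
  -- b is integral over ℤ, hence in 𝓞 L
  have hbint : IsIntegral ℤ b := by
    have : IsIntegral ℤ (b ^ k) := by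
      rw [hb]; exact (t : 𝓞 L).2
    exact this.of_pow hk.pos
  set β : 𝓞 L := ⟨b, hbint⟩ with hβ
  have hβk : β ^ k = (t : 𝓞 L) := by
    ext
    push_cast
    exact hb
  have hβu : IsUnit β :=
    isUnit_of_dvd_unit (hβk ▸ dvd_pow_self β hk.pos.ne') t.isUnit
  obtain ⟨B, hB⟩ := hβu
  have hBk : B ^ k = t := by
    ext
    push_cast [hB, hβk]
    rfl
  obtain ⟨⟨η, c⟩, ⟨hη, hBdec⟩, _⟩ := hu B
  obtain ⟨p, _, huniq⟩ := hu t
  have h1 : p = (ζ, a) := (huniq (ζ, a) ⟨hζ, ht⟩).symm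
  have h2 : p = (η ^ k, fun i => k * c i) := by
    refine (huniq _ ?_).symm
    constructor
    · exact hη.pow
    · rw [← hBk, hBdec, mul_pow, ← Finset.prod_pow]
      congr 1
      refine Finset.prod_congr rfl fun i _ => ?_
      rw [← zpow_natCast ((u i ^ c i)), ← zpow_mul, mul_comm]
  have ha : ∀ i, (k : ℤ) ∣ a i := by
    intro i
    have : a i = k * c i := by
      have := h1 ▸ h2
      exact congrFun (congrArg Prod.snd this) i
    exact ⟨c i, this⟩
  exact hdvd (Finset.dvd_gcd fun i _ => ha i)
end

section
/- Let L be a number field and t a nonzero element of O_L. Suppose there exists a nonzero prime ideal P of O_L such that the valuation v_P(t) is positive. Let k be a prime number not dividing v_P(t). Then the polynomial T^k − t is irreducible over L(e^{2πi/k}). -/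
open NumberField Polynomial UniqueFactorizationMonoid Classical

theorem irreducible_X_pow_sub_nonunit_over_cyclotomic
    (L : Type) [Field L] [NumberField L] [DecidableEq (Ideal (𝓞 L))] (t : 𝓞 L) (ht : t ≠ 0)
    (P : Ideal (𝓞 L)) (hP : P.IsPrime) (hP0 : P ≠ ⊥)
    (k : ℕ) (hk : k.Prime)
    (hv : 0 < Multiset.count P (normalizedFactors (Ideal.span {t})))
    (hdvd : ¬ k ∣ Multiset.count P (normalizedFactors (Ideal.span {t})))
    (M : Type) [Field M] [Algebra L M] [IsCyclotomicExtension {k} L M] :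
    Irreducible ((X ^ k - C (algebraMap (𝓞 L) L t)).map (algebraMap L M)) := by
  let n : ℕ := k
  haveI : NeZero n := ⟨hk.ne_zero⟩
  set t' : L := algebraMap (𝓞 L) L t with ht'
  -- Step 1: X^k - C t' is irreducible over L
  have hirrL : Irreducible (X ^ k - C t') := by
    refine X_pow_sub_C_irreducible_of_prime hk ?_
    intro b hb
    -- b is integral over 𝓞 L
    have hbint : IsIntegral (𝓞 L) b := by
      refine ⟨X ^ k - C t, ?_, ?_⟩
      · exact monic_X_pow_sub_C _ hk.ne_zero
      · simp [eval₂_sub, eval₂_pow, hb, ht']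
    obtain ⟨c, hc⟩ := IsIntegrallyClosed.isIntegral_iff.1 hbint
    have hck : c ^ k = t := by
      apply FaithfulSMul.algebraMap_injective (𝓞 L) L
      rw [map_pow, hc, hb]
    have hspan : Ideal.span {t} = Ideal.span {c} ^ k := by
      rw [← hck, Ideal.span_singleton_pow]
    have : Multiset.count P (normalizedFactors (Ideal.span {t}))
        = k * Multiset.count P (normalizedFactors (Ideal.span {c})) := by
      rw [hspan, normalizedFactors_pow, Multiset.count_nsmul]
    exact hdvd ⟨_, this⟩
  -- convert goal
  rw [Polynomial.map_sub, Polynomial.map_pow, map_X, map_C]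
  refine X_pow_sub_C_irreducible_of_prime hk ?_
  intro b hb
  -- finite dimensionality
  haveI : FiniteDimensional L M := IsCyclotomicExtension.finiteDimensional {n} L M
  -- b is a root of X^k - C t' over L, whose degree is k
  have hbroot : aeval b (X ^ k - C t') = 0 := by
    simp [hb, Algebra.smul_def]
  have hmin : minpoly L b = X ^ k - C t' := by
    symm
    refine minpoly.eq_of_irreducible_of_monic hirrL hbroot (monic_X_pow_sub_C _ hk.ne_zero)
  have hbint : IsIntegral L b := ⟨X ^ k - C t', monic_X_pow_sub_C _ hk.ne_zero, by
    simpa [aeval_def] using hbroot⟩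
  have hdeg : Module.finrank L (IntermediateField.adjoin L {b}) = k := by
    rw [IntermediateField.adjoin.finrank hbint, hmin, natDegree_X_pow_sub_C]
  have hdvd2 : k ∣ Module.finrank L M := by
    rw [← Module.finrank_mul_finrank L (IntermediateField.adjoin L {b}) M, ← hdeg]
    exact Dvd.intro _ rfl
  -- bound on finrank L M
  have hζ := IsCyclotomicExtension.zeta_spec n L M
  have hfr : Module.finrank L M = (minpoly L (IsCyclotomicExtension.zeta n L M)).natDegree := by
    rw [(hζ.powerBasis L).finrank, IsPrimitiveRoot.powerBasis_dim]
  have hdvdcyc : minpoly L (IsCyclotomicExtension.zeta n L M) ∣ cyclotomic k L := by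
    apply minpoly.dvd
    have := hζ.isRoot_cyclotomic (n := k) hk.pos
    rw [IsRoot.def, ← map_cyclotomic k (algebraMap L M), eval_map, ← aeval_def] at this
    exact this
  have hle : Module.finrank L M ≤ k - 1 := by
    rw [hfr]
    calc (minpoly L (IsCyclotomicExtension.zeta n L M)).natDegree
        ≤ (cyclotomic k L).natDegree :=
          natDegree_le_of_dvd hdvdcyc (cyclotomic_ne_zero k L)
      _ = k.totient := natDegree_cyclotomic k L
      _ = k - 1 := Nat.totient_prime hk
  have hpos : 0 < Module.finrank L M := Module.finrank_pos
  have := Nat.le_of_dvd hpos hdvd2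
  omega
end

section
/- Let L be a number field, t a nonzero non-unit element of O_L, P a prime ideal of O_L with v_P(t) ≥ 1, and k a prime not dividing v_P(t). Then t is not a k-th power in the ring of integers of L(e^{2πi/k}). -/
open NumberField UniqueFactorizationMonoid

theorem not_kth_power_in_cyclotomic_integers
    (L : Type) [Field L] [NumberField L] [DecidableEq (Ideal (𝓞 L))]
    (t : 𝓞 L) (ht : t ≠ 0) (htu : ¬ IsUnit t)
    (P : Ideal (𝓞 L)) (hP : P.IsPrime) (hP0 : P ≠ ⊥)
    (hv : 1 ≤ Multiset.count P (normalizedFactors (Ideal.span {t})))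
    (k : ℕ) (hk : k.Prime)
    (hdvd : ¬ k ∣ Multiset.count P (normalizedFactors (Ideal.span {t})))
    (M : Type) [Field M] [Algebra L M] [IsCyclotomicExtension {k} L M]
    [NumberField M] :
    ¬ ∃ x : 𝓞 M, algebraMap (𝓞 L) (𝓞 M) t = x ^ k := by
  classical
  rintro ⟨x, hx⟩
  set f := algebraMap (𝓞 L) (𝓞 M) with hf
  have hfinj : Function.Injective f :=
    FaithfulSMul.algebraMap_injective (𝓞 L) (𝓞 M)
  set n := Multiset.count P (normalizedFactors (Ideal.span {t})) with hn
  set I : Ideal (𝓞 L) := Ideal.span {t} with hI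
  have hI0 : I ≠ ⊥ := by simpa [hI] using ht
  have hPirr : Irreducible P := (Ideal.prime_of_isPrime hP0 hP).irreducible
  haveI hPmax : P.IsMaximal := hP.isMaximal hP0
  -- I = P ^ n * J with ¬ P ∣ J
  have hpow : ∀ m : ℕ, P ^ m ∣ I ↔ m ≤ n := by
    intro m
    rw [dvd_iff_normalizedFactors_le_normalizedFactors (pow_ne_zero _ hP0) hI0,
      normalizedFactors_pow, normalizedFactors_irreducible hPirr, normalize_eq,
      Multiset.nsmul_singleton, ← Multiset.le_count_iff_replicate_le]
  obtain ⟨J, hJ⟩ : P ^ n ∣ I := (hpow n).mpr le_rfl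
  have hPJ : ¬ P ∣ J := by
    rintro ⟨K, hK⟩
    have : P ^ (n + 1) ∣ I := ⟨K, by rw [hJ, hK]; ring⟩
    exact absurd ((hpow _).mp this) (by omega)
  have hJ0 : J ≠ 0 := by rintro rfl; rw [mul_zero] at hJ; exact hI0 hJ
  -- a prime Q over P
  have hmapP0 : Ideal.map f P ≠ ⊥ := by
    rwa [Ne, Ideal.map_eq_bot_iff_of_injective hfinj]
  obtain ⟨Q, hQmax, hQcomap⟩ := Ideal.exists_ideal_over_maximal_of_isIntegral P
    (by rw [(RingHom.injective_iff_ker_eq_bot f).mp hfinj]; exact bot_le)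
  haveI hQprime : Q.IsPrime := hQmax.isPrime
  have hQ0 : Q ≠ ⊥ := by
    rintro rfl
    rw [Ideal.comap_bot_of_injective f hfinj] at hQcomap
    exact hP0 hQcomap.symm
  have hQirr : Irreducible Q := (Ideal.prime_of_isPrime hQ0 hQprime).irreducible
  have hQdvdP : Q ∣ Ideal.map f P := by
    rw [Ideal.dvd_iff_le, Ideal.map_le_iff_le_comap, hQcomap]
  have hQmem : Q ∈ normalizedFactors (Ideal.map f P) := by
    obtain ⟨q, hq, hassoc⟩ := exists_mem_normalizedFactors_of_dvd hmapP0 hQirr hQdvdP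
    rwa [associated_iff_eq.mp hassoc]
  set e := Multiset.count Q (normalizedFactors (Ideal.map f P)) with he
  have he1 : 1 ≤ e := Multiset.one_le_count_iff_mem.mpr hQmem
  -- e < k
  have hfinrank : Module.finrank L M ≤ k - 1 := by
    haveI : NeZero k := ⟨hk.ne_zero⟩
    have hζ := IsCyclotomicExtension.zeta_spec k L M
    rw [(hζ.powerBasis L).finrank, hζ.powerBasis_dim L]
    have hdvd' : minpoly L (IsCyclotomicExtension.zeta k L M) ∣
        Polynomial.cyclotomic k L := by
      apply minpoly.dvd
      simpa [Polynomial.aeval_def, ← Polynomial.IsRoot.def, Polynomial.eval₂_eq_eval_map]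
        using hζ.isRoot_cyclotomic hk.pos
    calc (minpoly L _).natDegree ≤ (Polynomial.cyclotomic k L).natDegree :=
          Polynomial.natDegree_le_of_dvd hdvd' (Polynomial.cyclotomic_ne_zero k L)
      _ = k.totient := Polynomial.natDegree_cyclotomic k L
      _ = k - 1 := Nat.totient_prime hk
  haveI : Q.LiesOver P := ⟨hQcomap.symm⟩
  have hek : e < k := by
    have hQfin : Q ∈ (factors (Ideal.map f P)).toFinset := by
      rw [Multiset.mem_toFinset, factors_eq_normalizedFactors]; exact hQmem
    have hsum := Ideal.sum_ramification_inertia (S := 𝓞 M) (p := P) L M hP0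
    have hterm : Ideal.ramificationIdx' P Q * Ideal.inertiaDeg' P Q ≤ Module.finrank L M := by
      rw [← hsum]
      exact Finset.single_le_sum (f := fun Q => Ideal.ramificationIdx' P Q * Ideal.inertiaDeg' P Q)
        (fun i _ => Nat.zero_le _) hQfin
    have heram : e = Ideal.ramificationIdx' P Q :=
      (Ideal.IsDedekindDomain.ramificationIdx'_eq_normalizedFactors_count hmapP0 hQprime hQ0).symm
    have hfpos : 0 < Ideal.inertiaDeg' P Q := Ideal.inertiaDeg'_pos P Q
    have : e ≤ Module.finrank L M := by
      calc e = e * 1 := (mul_one e).symm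
        _ ≤ Ideal.ramificationIdx' P Q * Ideal.inertiaDeg' P Q := by
            rw [heram]; exact Nat.mul_le_mul_left _ hfpos
        _ ≤ Module.finrank L M := hterm
    omega
  -- counting both ways
  have hmapI : Ideal.map f I = Ideal.span {x} ^ k := by
    rw [hI, Ideal.map_span, Set.image_singleton, hx, Ideal.span_singleton_pow]
  have hmapJ0 : Ideal.map f J ≠ ⊥ := by
    rwa [Ne, Ideal.map_eq_bot_iff_of_injective hfinj]
  have hcount0 : Multiset.count Q (normalizedFactors (Ideal.map f J)) = 0 := by
    rw [Multiset.count_eq_zero]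
    intro hmem
    apply hPJ
    rw [Ideal.dvd_iff_le, ← hQcomap]
    exact Ideal.le_comap_of_map_le (Ideal.le_of_dvd (dvd_of_mem_normalizedFactors hmem))
  have hcount1 : Multiset.count Q (normalizedFactors (Ideal.map f I)) = n * e := by
    rw [hJ, Ideal.map_mul, Ideal.map_pow,
      normalizedFactors_mul (pow_ne_zero _ hmapP0) hmapJ0, Multiset.count_add,
      normalizedFactors_pow, Multiset.count_nsmul, hcount0, add_zero]
  have hcount2 : Multiset.count Q (normalizedFactors (Ideal.map f I)) =
      k * Multiset.count Q (normalizedFactors (Ideal.span {x})) := by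
    rw [hmapI, normalizedFactors_pow, Multiset.count_nsmul]
  have hkdvd : k ∣ n * e := hcount1 ▸ hcount2 ▸ Dvd.intro _ rfl
  rcases (Nat.Prime.dvd_mul hk).mp hkdvd with h | h
  · exact hdvd h
  · exact absurd (Nat.le_of_dvd (by omega) h) (by omega)
end

section
/- Let L be a number field with ring of integers O_L and let t ∈ O_L be nonzero and not a unit. Then for all but finitely many prime numbers k, the polynomial T^k − t is irreducible over L(e^{2πi/k}). -/
open NumberField Polynomial

-- auxiliary: finrank of cyclotomic extension is at most totient
theorem aux_finrank_le_totient (k : ℕ+) (L M : Type*) [Field L] [Field M] [CharZero L]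
    [Algebra L M] [IsCyclotomicExtension {(k : ℕ)} L M] :
    Module.finrank L M ≤ Nat.totient k := by
  obtain ⟨ζ, hζ⟩ := IsCyclotomicExtension.exists_isPrimitiveRoot L M (Set.mem_singleton (k : ℕ)) k.ne_zero
  haveI : FiniteDimensional L M := IsCyclotomicExtension.finiteDimensional {(k : ℕ)} L M
  have hint : IsIntegral L ζ := Algebra.IsIntegral.isIntegral ζ
  have htop : IntermediateField.adjoin L ({ζ} : Set M) = ⊤ := by
    apply IntermediateField.toSubalgebra_injective
    rw [IntermediateField.adjoin_simple_toSubalgebra_of_isAlgebraic hint.isAlgebraic]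
    rw [IsCyclotomicExtension.adjoin_primitive_root_eq_top hζ]
    rfl
  have hfr : Module.finrank L M = (minpoly L ζ).natDegree := by
    rw [← IntermediateField.adjoin.finrank hint, htop]
    exact IntermediateField.finrank_top'.symm
  have hdvd : minpoly L ζ ∣ cyclotomic k L := by
    apply minpoly.dvd
    have : (cyclotomic (k : ℕ) M).IsRoot ζ := hζ.isRoot_cyclotomic k.pos
    rw [aeval_def, eval₂_eq_eval_map, map_cyclotomic]
    exact this
  rw [hfr]
  calc (minpoly L ζ).natDegree ≤ (cyclotomic (k : ℕ) L).natDegree :=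
        natDegree_le_of_dvd hdvd (cyclotomic_ne_zero k L)
    _ = Nat.totient k := natDegree_cyclotomic k L

theorem cofinitely_many_primes_irreducible_over_cyclotomic
    (L : Type) [Field L] [NumberField L]
    (t : 𝓞 L) (ht : t ≠ 0) (htu : ¬ IsUnit t) :
    ∃ S : Finset ℕ, ∀ (k : ℕ) (hk : k.Prime), k ∉ S →
      ∀ (M : Type) [Field M] [Algebra L M] [IsCyclotomicExtension {k} L M],
        Irreducible ((X ^ k - C (algebraMap (𝓞 L) L t)).map (algebraMap L M)) := by
  -- the norm of t down to ℤ
  set n : ℤ := Algebra.norm ℤ t with hn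
  have hrn : ((n : ℚ)) = Algebra.norm ℚ (algebraMap (𝓞 L) L t) := Algebra.coe_norm_int t
  have hL0 : (algebraMap (𝓞 L) L t) ≠ 0 := by
    simpa using (RingOfIntegers.coe_ne_zero_iff).2 ht
  have hr0 : Algebra.norm ℚ (algebraMap (𝓞 L) L t) ≠ 0 := by
    rw [Algebra.norm_ne_zero_iff]
    exact hL0
  have hn0 : n ≠ 0 := by
    intro h
    apply hr0
    rw [← hrn, h]; simp
  have hnu : n.natAbs ≠ 1 := by
    intro h
    apply htu
    rw [NumberField.isUnit_iff_norm]
    have : |(n : ℚ)| = 1 := by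
      rw [← Int.cast_abs, Int.abs_eq_natAbs, h]; simp
    rw [← RingOfIntegers.coe_norm] at hrn
    rw [← hrn]
    exact this
  obtain ⟨p, hp, hpdvd⟩ := Nat.exists_prime_and_dvd hnu
  haveI : Fact p.Prime := ⟨hp⟩
  set a : ℕ := padicValInt p n with ha
  have ha1 : 1 ≤ a := by
    rw [ha, padicValInt]
    exact one_le_padicValNat_of_dvd (by simpa using hn0 : n.natAbs ≠ 0) hpdvd
  refine ⟨a.divisors, ?_⟩
  intro k hk hkS M _ _ _
  have hka : ¬ (k ∣ a) := fun h => hkS (Nat.mem_divisors.2 ⟨h, by omega⟩)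
  haveI : NumberField M := IsCyclotomicExtension.numberField {k} L M
  haveI : FiniteDimensional L M :=
    IsCyclotomicExtension.finiteDimensional {k} L M
  set d : ℕ := Module.finrank L M with hd
  have hd1 : 1 ≤ d := Module.finrank_pos
  have hdk : d < k := by
    have := @aux_finrank_le_totient (⟨k, hk.pos⟩ : ℕ+) L M _ _ _ _ ‹IsCyclotomicExtension {k} L M›
    have h2 : Nat.totient k < k := Nat.totient_lt k hk.one_lt
    have heq : Nat.totient ((⟨k, hk.pos⟩ : ℕ+) : ℕ) = Nat.totient k := rfl
    exact lt_of_le_of_lt (this.trans heq.le) h2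
  rw [Polynomial.map_sub, Polynomial.map_pow, map_X, map_C]
  apply X_pow_sub_C_irreducible_of_prime hk
  intro b hb
  -- take norms down to ℚ
  have hb0 : b ≠ 0 := by
    intro h
    apply hL0
    apply (algebraMap L M).injective
    rw [← hb, h, zero_pow hk.ne_zero, map_zero]
  have hnormb : (Algebra.norm ℚ b) ^ k = ((n : ℚ)) ^ d := by
    have h1 : Algebra.norm ℚ (b ^ k) = (Algebra.norm ℚ b) ^ k := map_pow _ _ _
    rw [← h1, hb]
    rw [← Algebra.norm_norm (R := ℚ) (S := L) (a := algebraMap L M (algebraMap (𝓞 L) L t))]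
    rw [Algebra.norm_algebraMap, map_pow, hrn]
  have hNb0 : Algebra.norm ℚ b ≠ 0 := by
    rw [Algebra.norm_ne_zero_iff]; exact hb0
  -- p-adic valuations
  have hval : (k : ℤ) * padicValRat p (Algebra.norm ℚ b) = (d : ℤ) * a := by
    have h1 : padicValRat p ((Algebra.norm ℚ b) ^ k) = k * padicValRat p (Algebra.norm ℚ b) :=
      padicValRat.pow _
    have h2 : padicValRat p (((n : ℚ)) ^ d) = d * padicValRat p ((n : ℚ)) :=
      padicValRat.pow _
    have h3 : padicValRat p ((n : ℚ)) = (a : ℤ) := by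
      rw [ha, ← padicValRat.of_int]
    rw [← h1, hnormb, h2, h3]
  have hdvd : (k : ℤ) ∣ (d : ℤ) * a := ⟨_, hval.symm⟩
  have : (k : ℤ) ∣ (d : ℤ) ∨ (k : ℤ) ∣ (a : ℤ) :=
    (Int.Prime.dvd_mul' (by exact_mod_cast hk) hdvd).imp id id
  rcases this with h | h
  · have : k ∣ d := Int.ofNat_dvd.1 h
    exact absurd (Nat.le_of_dvd (by omega) this) (by omega)
  · exact hka (Int.ofNat_dvd.1 h)
end
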